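/- Let m ≥ 2 be an integer with prime factorization m = p_1^{r_1} p_2^{r_2} ⋯ p_j^{r_j}, let G be a finite commutative group, set k = max{r_1, ..., r_j}, c_i = (p_1 p_2 ⋯ p_j)/p_i, and let t_i be a natural number with t_i·c_i ≡ 1 (mod p_i). Suppose f_1, ..., f_j ∈ ℤ_m G are such that for each i the reduction of f_i modulo p_i is a unit of ℤ_{p_i}G, and let g_i ∈ ℤ_m G be such that the reduction of f_i·g_i modulo p_i is 1 in ℤ_{p_i}G. Then f = t_1 c_1 f_1 + ⋯ + t_j c_j f_j is a unit in ℤ_m G, with f^{-1} = (t_1 c_1 g_1 + ⋯ + t_j c_j g_j)^{(p_1 p_2 ⋯ p_j)^{k−1}} · (t_1 c_1 f_1 + ⋯ + t_j c_j f_j)^{(p_1 p_2 ⋯ p_j)^{k−1} − 1}. Moreover, |(ℤ_m G)*| = (m/(p_1 p_2 ⋯ p_j))^{|G|} · |(ℤ_{p_1 p_2 ⋯ p_j}G)*|. -/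

import Mathlib

open MonoidAlgebra in
/-- Reduction of coefficients: the canonical ring homomorphism
`ℤ_m G →+* ℤ_n G` induced by the reduction `ℤ_m → ℤ_n` (for `n ∣ m`),
sending `∑ cᵧ γ` to `∑ (cᵧ mod n) γ`. -/
noncomputable def zmodGroupRingReduce (m n : ℕ) (h : n ∣ m) (G : Type*) [CommGroup G] :
    MonoidAlgebra (ZMod m) G →+* MonoidAlgebra (ZMod n) G :=
  liftNCRingHom (singleOneRingHom.comp (ZMod.castHom h (ZMod n))) (of (ZMod n) G)
    (fun _ _ => Commute.all _ _)

/-- Let `m ≥ 2` with prime factorization `m = ∏ i, p i ^ r i`,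
`G` a finite commutative group, `k = max r i`, `cᵢ = (∏ i, p i) / p i`, and
`t i` natural numbers with `t i * cᵢ ≡ 1 (mod p i)`.  If `f i ∈ ℤ_m G` have
unit reductions modulo `p i`, with `g i` reducing to inverses of `f i` modulo
`p i`, then `F = ∑ i, (t i * cᵢ) • f i` is a unit of `ℤ_m G` whose inverse is
`(∑ i, (t i * cᵢ) • g i) ^ P ^ (k-1) * F ^ (P ^ (k-1) - 1)` where
`P = ∏ i, p i`; moreover `|(ℤ_m G)ˣ| = (m / P) ^ |G| * |(ℤ_P G)ˣ|`. -/

lemma zmodGroupRingReduce_apply (m n : ℕ) (h : n ∣ m) {G : Type*} [CommGroup G]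
    (x : MonoidAlgebra (ZMod m) G) (a : G) :
    (zmodGroupRingReduce m n h G x).coeff a = ZMod.castHom h (ZMod n) (x.coeff a) := by
  classical
  induction x using MonoidAlgebra.induction_linear with
  | zero => simp
  | add u v hu hv =>
    rw [map_add, MonoidAlgebra.coeff_add, MonoidAlgebra.coeff_add, Finsupp.add_apply, Finsupp.add_apply, hu, hv, map_add]
  | single b c =>
    simp only [zmodGroupRingReduce, MonoidAlgebra.liftNCRingHom, RingHom.coe_mk,
      MonoidHom.coe_mk, OneHom.coe_mk, AddMonoidHom.toFun_eq_coe,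
      MonoidAlgebra.liftNC_single, RingHom.coe_comp, RingHom.comp_apply, AddMonoidHom.coe_coe, Finsupp.singleAddHom_apply,
      Function.comp_apply, MonoidAlgebra.singleOneRingHom_apply,
      MonoidAlgebra.of_apply, MonoidAlgebra.single_mul_single, one_mul, mul_one,
      Finsupp.single_apply, MonoidAlgebra.coeff_single]
    split <;> simp_all [Finsupp.single_apply]

lemma one_add_pow_eq {R : Type*} [CommRing R] (a : R) (n : ℕ) :
    ∃ y, (1 + a) ^ n = 1 + n * a + a ^ 2 * y := by
  induction n with
  | zero => exact ⟨0, by ring⟩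
  | succ n ih =>
    obtain ⟨y, hy⟩ := ih
    exact ⟨(n : R) + y + a * y, by rw [pow_succ, hy]; push_cast; ring⟩

lemma one_add_nsmul_pow {R : Type*} [CommRing R] (P : ℕ) (x : R) (t : ℕ) :
    ∃ z, (1 + (P : R) * x) ^ P ^ t = 1 + (P : R) ^ (t + 1) * z := by
  induction t generalizing x with
  | zero => exact ⟨x, by simp⟩
  | succ t ih =>
    obtain ⟨z, hz⟩ := ih x
    obtain ⟨y, hy⟩ := one_add_pow_eq ((P : R) ^ (t + 1) * z) P
    refine ⟨z + (P : R) ^ t * z ^ 2 * y, ?_⟩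
    rw [pow_succ P t, pow_mul, hz, hy]
    ring

lemma exists_nsmul_of_dvd_val {m : ℕ} [NeZero m] (P : ℕ) {G : Type*} [CommGroup G]
    (D : MonoidAlgebra (ZMod m) G) (hD : ∀ a, P ∣ (D.coeff a).val) :
    ∃ x : MonoidAlgebra (ZMod m) G, D = P • x := by
  refine ⟨MonoidAlgebra.ofCoeff (Finsupp.mapRange (fun c => ((c.val / P : ℕ) : ZMod m)) (by simp) D.coeff), ?_⟩
  ext a
  rw [MonoidAlgebra.coeff_smul, Finsupp.smul_apply, MonoidAlgebra.coeff_ofCoeff, Finsupp.mapRange_apply, nsmul_eq_mul, ← Nat.cast_mul,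
    Nat.mul_div_cancel' (hD a), ZMod.natCast_val, ZMod.cast_id]

lemma zmod_groupRing_card_units_aux {G : Type*} [CommGroup G] [Finite G] (m P k : ℕ)
    (hm0 : m ≠ 0) (hP0 : P ≠ 0) (hPm : P ∣ m) (hmPk : m ∣ P ^ k) :
    Nat.card (MonoidAlgebra (ZMod m) G)ˣ =
      (m / P) ^ Nat.card G * Nat.card (MonoidAlgebra (ZMod P) G)ˣ := by
  classical
  haveI : NeZero m := ⟨hm0⟩
  haveI : NeZero P := ⟨hP0⟩
  set R := MonoidAlgebra (ZMod m) G with hR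
  set S := MonoidAlgebra (ZMod P) G with hS
  let ρ : R →+* S := zmodGroupRingReduce m P hPm G
  have hρa : ∀ (x : R) (a : G), (ρ x).coeff a = ZMod.castHom hPm (ZMod P) (x.coeff a) :=
    fun x a => zmodGroupRingReduce_apply m P hPm x a
  have hker : ∀ x : R, ρ x = 0 ↔ ∀ a : G, ZMod.castHom hPm (ZMod P) (x.coeff a) = 0 := by
    intro x
    constructor
    · intro h a; rw [← hρa, h, MonoidAlgebra.coeff_zero, Finsupp.zero_apply]
    · intro h
      refine MonoidAlgebra.ext (Finsupp.ext fun a => ?_)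
      rw [hρa, h, MonoidAlgebra.coeff_zero, Finsupp.zero_apply]
  have hsurj : Function.Surjective ρ := by
    intro s
    refine ⟨MonoidAlgebra.ofCoeff (Finsupp.mapRange (fun c : ZMod P => ((c.val : ℕ) : ZMod m)) (by simp) s.coeff), ?_⟩
    refine MonoidAlgebra.ext (Finsupp.ext fun a => ?_)
    rw [hρa, MonoidAlgebra.coeff_ofCoeff, Finsupp.mapRange_apply, map_natCast, ZMod.natCast_val, ZMod.cast_id]
  have hnil : ∀ e : R, ρ e = 0 → IsNilpotent e := by
    intro e he
    have hdv : ∀ a : G, P ∣ (e.coeff a).val := by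
      intro a
      have h1 := (hker e).1 he a
      rwa [ZMod.castHom_apply, ← ZMod.natCast_val, ZMod.natCast_eq_zero_iff] at h1
    obtain ⟨x, hx⟩ := exists_nsmul_of_dvd_val P e hdv
    refine ⟨k, ?_⟩
    rw [hx, smul_pow, ← Nat.cast_smul_eq_nsmul (ZMod m),
      (ZMod.natCast_eq_zero_iff _ _).mpr hmPk, zero_smul]
  have hunit : ∀ x : R, IsUnit (ρ x) → IsUnit x := by
    intro x hx
    obtain ⟨u, hu⟩ := hx
    obtain ⟨y, hy⟩ := hsurj ((u⁻¹ : Sˣ) : S)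
    have h1 : ρ (x * y) = 1 := by rw [map_mul, ← hu, hy, u.mul_inv]
    have h2 : IsNilpotent (x * y - 1) := hnil _ (by rw [map_sub, h1, map_one, sub_self])
    have h3 : IsUnit (x * y) := by
      have h4 := h2.isUnit_one_add
      have h5 : 1 + (x * y - 1) = x * y := by ring
      rwa [h5] at h4
    exact isUnit_of_mul_isUnit_left h3
  let φ : Rˣ →* Sˣ := Units.map (ρ : R →* S)
  have hφsurj : Function.Surjective φ := by
    intro u
    obtain ⟨x, hx⟩ := hsurj (u : S)
    have hxu : IsUnit x := hunit x (by rw [hx]; exact u.isUnit)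
    obtain ⟨v, hv⟩ := hxu
    refine ⟨v, Units.ext ?_⟩
    rw [Units.coe_map]
    show ρ (v : R) = (u : S)
    rw [hv, hx]
  have hcard1 : Nat.card Rˣ = Nat.card Sˣ * Nat.card (MonoidHom.ker φ) := by
    rw [Subgroup.card_eq_card_quotient_mul_card_subgroup (MonoidHom.ker φ),
      Nat.card_congr (QuotientGroup.quotientKerEquivOfSurjective φ hφsurj).toEquiv]
  have hρu : ∀ u : MonoidHom.ker φ, ρ ((u : Rˣ) : R) = 1 := by
    intro u
    have h := u.2
    rw [MonoidHom.mem_ker] at h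
    have h' := congrArg (Units.val) h
    rwa [Units.coe_map, Units.val_one] at h'
  have hnil1 : ∀ e : {x : R // ρ x = 0}, IsUnit (1 + (e : R)) :=
    fun e => (hnil e.1 e.2).isUnit_one_add
  let e1 : MonoidHom.ker φ ≃ {x : R // ρ x = 0} :=
    { toFun := fun u => ⟨((u : Rˣ) : R) - 1, by
        rw [map_sub, map_one, hρu u, sub_self]⟩
      invFun := fun e => ⟨(hnil1 e).unit, by
        rw [MonoidHom.mem_ker]
        apply Units.ext
        rw [Units.coe_map]
        show ρ ((hnil1 e).unit : R) = _
        rw [IsUnit.unit_spec, map_add, map_one, e.2, add_zero, Units.val_one]⟩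
      left_inv := fun u => by
        apply Subtype.ext; apply Units.ext
        show ((hnil1 _).unit : R) = _
        rw [IsUnit.unit_spec]
        ring
      right_inv := fun e => by
        apply Subtype.ext
        show ((hnil1 e).unit : R) - 1 = (e : R)
        rw [IsUnit.unit_spec]
        ring }
  let e2 : {x : R // ρ x = 0} ≃ ∀ a : G, {c : ZMod m // ZMod.castHom hPm (ZMod P) c = 0} :=
    (Equiv.subtypeEquiv (MonoidAlgebra.coeffEquiv.trans Finsupp.equivFunOnFinite)
      (fun x => (hker x).trans Iff.rfl)).trans (Equiv.subtypePiEquivPi)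
  have hcK : Nat.card {c : ZMod m // ZMod.castHom hPm (ZMod P) c = 0} = m / P := by
    have hs : Function.Surjective (ZMod.castHom hPm (ZMod P)) := by
      intro c
      exact ⟨((c.val : ℕ) : ZMod m), by rw [map_natCast, ZMod.natCast_val, ZMod.cast_id]⟩
    set ψ : ZMod m →+ ZMod P := (ZMod.castHom hPm (ZMod P)).toAddMonoidHom with hψ
    have hq : Nat.card (ZMod m) = Nat.card (ZMod m ⧸ ψ.ker) * Nat.card ψ.ker :=
      AddSubgroup.card_eq_card_quotient_mul_card_addSubgroup ψ.ker
    have he : Nat.card (ZMod m ⧸ ψ.ker) = Nat.card (ZMod P) :=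
      Nat.card_congr (QuotientAddGroup.quotientKerEquivOfSurjective ψ hs).toEquiv
    rw [Nat.card_zmod, he, Nat.card_zmod] at hq
    have hkP : Nat.card ψ.ker = m / P :=
      (Nat.div_eq_of_eq_mul_left (Nat.pos_of_ne_zero hP0) (by rw [mul_comm]; exact hq)).symm
    rw [← hkP]
    exact Nat.card_congr (Equiv.subtypeEquivRight (fun c => by
      rw [AddMonoidHom.mem_ker]
      exact Iff.rfl))
  have hkerc : Nat.card (MonoidHom.ker φ) = (m / P) ^ Nat.card G := by
    haveI : Fintype G := Fintype.ofFinite G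
    rw [Nat.card_congr (e1.trans e2), Nat.card_pi, hcK, Finset.prod_const,
      Finset.card_univ, Nat.card_eq_fintype_card]
  rw [hcard1, hkerc, mul_comm]

theorem zmod_groupRing_unit_crt' {G : Type*} [CommGroup G] [Finite G]
    (m : ℕ) (hm2 : 2 ≤ m) (j : ℕ) (p r : Fin j → ℕ)
    (hp : ∀ i, (p i).Prime) (hpinj : Function.Injective p)
    (hr : ∀ i, 1 ≤ r i) (hm : m = ∏ i, p i ^ r i)
    (hdvd : ∀ i, p i ∣ m)
    (t : Fin j → ℕ) (ht : ∀ i, t i * ((∏ i', p i') / p i) ≡ 1 [MOD p i])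
    (f g : Fin j → MonoidAlgebra (ZMod m) G)
    (hf : ∀ i, IsUnit (zmodGroupRingReduce m (p i) (hdvd i) G (f i)))
    (hg : ∀ i, zmodGroupRingReduce m (p i) (hdvd i) G (f i * g i) = 1) :
    IsUnit (∑ i, (t i * ((∏ i', p i') / p i)) • f i) ∧
    (∑ i, (t i * ((∏ i', p i') / p i)) • f i) *
      ((∑ i, (t i * ((∏ i', p i') / p i)) • g i) ^
          ((∏ i, p i) ^ (Finset.univ.sup r - 1)) *
        (∑ i, (t i * ((∏ i', p i') / p i)) • f i) ^
          ((∏ i, p i) ^ (Finset.univ.sup r - 1) - 1)) = 1 ∧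
    Nat.card (MonoidAlgebra (ZMod m) G)ˣ =
      (m / ∏ i, p i) ^ Nat.card G * Nat.card (MonoidAlgebra (ZMod (∏ i, p i)) G)ˣ := by
  classical
  haveI : NeZero m := ⟨by omega⟩
  set P : ℕ := ∏ i, p i with hPdef
  set k : ℕ := Finset.univ.sup r with hkdef
  set N : ℕ := P ^ (k - 1) with hNdef
  set F : MonoidAlgebra (ZMod m) G := ∑ i, (t i * (P / p i)) • f i with hFdef
  set H : MonoidAlgebra (ZMod m) G := ∑ i, (t i * (P / p i)) • g i with hHdef
  have hP0 : 0 < P := Finset.prod_pos fun i _ => (hp i).pos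
  have hPm : P ∣ m := by
    rw [hm]
    exact Finset.prod_dvd_prod_of_dvd _ _ fun i _ =>
      dvd_pow_self (p i) (by have := hr i; omega)
  have hj : 0 < j := by
    rcases Nat.eq_zero_or_pos j with h0 | h0
    · subst h0; simp at hm; omega
    · exact h0
  have hk1 : 1 ≤ k := le_trans (hr ⟨0, hj⟩) (Finset.le_sup (Finset.mem_univ _))
  have hmPk : m ∣ P ^ k := by
    rw [hm, hPdef, ← Finset.prod_pow]
    exact Finset.prod_dvd_prod_of_dvd _ _ fun i _ =>
      pow_dvd_pow (p i) (Finset.le_sup (Finset.mem_univ i))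
  have hone : ∀ i : Fin j, ((t i * (P / p i) : ℕ) : ZMod (p i)) = 1 := by
    intro i
    have h1 := (ZMod.natCast_eq_natCast_iff _ _ _).mpr (ht i)
    simpa using h1
  have hzero : ∀ i i' : Fin j, i' ≠ i → ((t i' * (P / p i') : ℕ) : ZMod (p i)) = 0 := by
    intro i i' hne
    rw [ZMod.natCast_eq_zero_iff]
    refine dvd_mul_of_dvd_right ?_ _
    have h1 : p i' * ∏ l ∈ Finset.univ.erase i', p l = P :=
      Finset.mul_prod_erase _ _ (Finset.mem_univ i')
    have h2 : P / p i' = ∏ l ∈ Finset.univ.erase i', p l := by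
      rw [← h1, Nat.mul_div_cancel_left _ (hp i').pos]
    rw [h2]
    exact Finset.dvd_prod_of_mem _ (Finset.mem_erase.mpr ⟨hne.symm, Finset.mem_univ i⟩)
  have hsum : ∀ (u : Fin j → MonoidAlgebra (ZMod m) G) (i : Fin j),
      zmodGroupRingReduce m (p i) (hdvd i) G (∑ i', (t i' * (P / p i')) • u i')
        = zmodGroupRingReduce m (p i) (hdvd i) G (u i) := by
    intro u i
    have hz : ∀ i' ∈ Finset.univ, i' ≠ i →
        zmodGroupRingReduce m (p i) (hdvd i) G ((t i' * (P / p i')) • u i') = 0 := by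
      intro i' _ hne
      rw [map_nsmul, ← Nat.cast_smul_eq_nsmul (ZMod (p i)), hzero i i' hne, zero_smul]
    rw [map_sum, Finset.sum_eq_single_of_mem i (Finset.mem_univ i) hz, map_nsmul,
      ← Nat.cast_smul_eq_nsmul (ZMod (p i)), hone i, one_smul]
  have hFH : ∀ i, zmodGroupRingReduce m (p i) (hdvd i) G (F * H) = 1 := by
    intro i
    rw [map_mul, hFdef, hHdef, hsum f i, hsum g i, ← map_mul, hg i]
  have hdivv : ∀ a : G, P ∣ ((F * H - 1 : MonoidAlgebra (ZMod m) G).coeff a).val := by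
    intro a
    have hpi : ∀ i, p i ∣ ((F * H - 1 : MonoidAlgebra (ZMod m) G).coeff a).val := by
      intro i
      have h0 : zmodGroupRingReduce m (p i) (hdvd i) G (F * H - 1) = 0 := by
        rw [map_sub, hFH i, map_one, sub_self]
      have h1 : ZMod.castHom (hdvd i) (ZMod (p i)) ((F * H - 1 : MonoidAlgebra (ZMod m) G).coeff a) = 0 := by
        rw [← zmodGroupRingReduce_apply, h0, MonoidAlgebra.coeff_zero, Finsupp.zero_apply]
      rwa [ZMod.castHom_apply, ← ZMod.natCast_val, ZMod.natCast_eq_zero_iff] at h1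
    have himg : P = ∏ q ∈ Finset.univ.image p, q := by
      rw [Finset.prod_image (fun x _ y _ hxy => hpinj hxy)]
    rw [himg]
    refine Finset.prod_primes_dvd _ (fun q hq => ?_) (fun q hq => ?_)
    · obtain ⟨i, _, rfl⟩ := Finset.mem_image.mp hq; exact (hp i).prime
    · obtain ⟨i, _, rfl⟩ := Finset.mem_image.mp hq; exact hpi i
  obtain ⟨x, hx⟩ := exists_nsmul_of_dvd_val P (F * H - 1) hdivv
  have hFH1 : F * H = 1 + (P : MonoidAlgebra (ZMod m) G) * x := by
    rw [← nsmul_eq_mul, ← hx]; ring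
  obtain ⟨z, hz⟩ := one_add_nsmul_pow P x (k - 1)
  rw [← hFH1] at hz
  have hPk0 : ((P : ℕ) : MonoidAlgebra (ZMod m) G) ^ k = 0 := by
    have h2 : ((P ^ k : ℕ) : ZMod m) = 0 := (ZMod.natCast_eq_zero_iff _ _).mpr hmPk
    rw [← Nat.cast_pow, ← map_natCast (algebraMap (ZMod m) (MonoidAlgebra (ZMod m) G)) (P ^ k), h2, map_zero]
  have hk' : k - 1 + 1 = k := by omega
  have hmain : (F * H) ^ N = 1 := by
    rw [hNdef, hz, hk', hPk0, zero_mul, add_zero]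
  have hN1 : 1 ≤ N := Nat.one_le_iff_ne_zero.mpr (pow_ne_zero _ (by omega))
  have part2 : F * (H ^ N * F ^ (N - 1)) = 1 := by
    have h3 : F * (H ^ N * F ^ (N - 1)) = F ^ (N - 1 + 1) * H ^ N := by ring
    rw [h3, Nat.sub_add_cancel hN1, ← mul_pow, hmain]
  exact ⟨IsUnit.of_mul_eq_one _ part2, part2,
    zmod_groupRing_card_units_aux m P k (by omega) (by omega) hPm hmPk⟩
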